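/- Let V = F_q^n with n ≥ 3, and let F be a family of subspaces with diam(F) ≤ d where n ≥ d+1. If F(1) and F(n−1) both have at least 2 elements each, then every member of F(1) is contained in every member of F(n−1), and consequently |F(1)| + |F(n−1)| ≤ 2·C_q(n−2,1) < C_q(n,1) − q^{n−1}. -/

import Mathlib

open Module

/-- The subspace distance `Δ(U,W) = dim U + dim W − 2 dim(U∩W)`. -/
noncomputable def sdelta (K V : Type*) [Field K] [AddCommGroup V] [Module K V]
    (U W : Submodule K V) : ℕ :=
  finrank K ↥U + finrank K ↥W - 2 * finrank K ↥(U ⊓ W)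

/-- The Gaussian binomial coefficient, via the `q`-Pascal recursion. -/
def gauss (q : ℕ) : ℕ → ℕ → ℕ
  | _, 0 => 1
  | 0, _ + 1 => 0
  | n + 1, k + 1 => gauss q n k + q ^ (k + 1) * gauss q n (k + 1)

lemma gauss_one_mul (q : ℕ) (hq : 1 ≤ q) : ∀ m, gauss q m 1 * (q - 1) = q ^ m - 1 := by
  intro m
  induction m with
  | zero => simp [gauss]
  | succ m ih =>
    have h1 : 1 ≤ q ^ m := Nat.one_le_pow _ _ hq
    cases q with
    | zero => omega
    | succ p =>
      show (gauss (p+1) m 0 + (p+1) ^ 1 * gauss (p+1) m 1) * (p + 1 - 1) = _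
      simp only [gauss, pow_one]
      have h2 : 1 ≤ (p + 1) ^ (m + 1) := Nat.one_le_pow _ _ (by omega)
      have hpow : (p + 1) ^ (m + 1) = (p + 1) * (p + 1) ^ m := by ring
      zify [h1, h2] at *
      push_cast at ih ⊢
      nlinarith [ih]

lemma count_lines {K : Type*} [Field K] [Fintype K] {V : Type*} [AddCommGroup V]
    [Module K V] [FiniteDimensional K V] (W : Submodule K V) (S : Set (Submodule K V))
    (hS : ∀ X ∈ S, finrank K ↥X = 1 ∧ X ≤ W) :
    S.ncard ≤ gauss (Fintype.card K) (finrank K ↥W) 1 := by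
  classical
  have hfinV : Finite V := Module.finite_of_finite K
  have : Fintype V := Fintype.ofFinite V
  have hfinSub : Finite (Submodule K V) :=
    Finite.of_injective (fun X : Submodule K V => (X : Set V)) SetLike.coe_injective
  have hfinS : S.Finite := Set.toFinite S
  set s : Finset (Submodule K V) := hfinS.toFinset with hs
  have hcard : S.ncard = s.card := by rw [hs]; exact Set.ncard_eq_toFinset_card S hfinS
  set q := Fintype.card K with hqdef
  have hq2 : 2 ≤ q := Fintype.one_lt_card
  set t : Submodule K V → Finset V := fun X => (X : Set V).toFinset.erase 0 with ht
  have htcard : ∀ X ∈ s, (t X).card = q - 1 := by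
    intro X hX
    have hX1 : finrank K ↥X = 1 := (hS X (hfinS.mem_toFinset.mp hX)).1
    have hcX : Fintype.card ↥(X : Set V) = q := by
      have := card_eq_pow_finrank (K := K) (V := ↥X)
      rw [hX1, pow_one] at this
      simpa using this
    have h0 : (0 : V) ∈ (X : Set V).toFinset := by simp
    rw [ht]
    simp only
    rw [Finset.card_erase_of_mem h0, Set.toFinset_card, hcX]
  have hdisj : ∀ X ∈ s, ∀ Y ∈ s, X ≠ Y → Disjoint (t X) (t Y) := by
    intro X hX Y hY hne
    rw [Finset.disjoint_left]
    intro v hvX hvY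
    apply hne
    have hv0 : v ≠ 0 := Finset.ne_of_mem_erase hvX
    have hvX' : v ∈ X := by simpa using Finset.mem_of_mem_erase hvX
    have hvY' : v ∈ Y := by simpa using Finset.mem_of_mem_erase hvY
    have hXf := (hS X (hfinS.mem_toFinset.mp hX)).1
    have hYf := (hS Y (hfinS.mem_toFinset.mp hY)).1
    have hXeq : X = K ∙ v := by
      refine (Submodule.eq_of_le_of_finrank_le ((Submodule.span_singleton_le_iff_mem v X).mpr hvX') ?_).symm
      rw [hXf, finrank_span_singleton hv0]
    have hYeq : Y = K ∙ v := by
      refine (Submodule.eq_of_le_of_finrank_le ((Submodule.span_singleton_le_iff_mem v Y).mpr hvY') ?_).symm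
      rw [hYf, finrank_span_singleton hv0]
    rw [hXeq, hYeq]
  have hsub : s.biUnion t ⊆ (W : Set V).toFinset.erase 0 := by
    intro v hv
    obtain ⟨X, hX, hvX⟩ := Finset.mem_biUnion.mp hv
    have hle := (hS X (hfinS.mem_toFinset.mp hX)).2
    refine Finset.mem_erase.mpr ⟨Finset.ne_of_mem_erase hvX, ?_⟩
    simp only [Set.mem_toFinset]
    exact hle (by simpa using Finset.mem_of_mem_erase hvX)
  have hWcard : ((W : Set V).toFinset.erase 0).card = q ^ finrank K ↥W - 1 := by
    rw [Finset.card_erase_of_mem (by simp), Set.toFinset_card]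
    have := card_eq_pow_finrank (K := K) (V := ↥W)
    simp only [← hqdef] at this
    rw [← this]
    congr 1
  have hbig : (s.biUnion t).card = s.card * (q - 1) := by
    rw [Finset.card_biUnion hdisj]
    rw [Finset.sum_congr rfl htcard, Finset.sum_const, smul_eq_mul]
  have hineq : s.card * (q - 1) ≤ q ^ finrank K ↥W - 1 := by
    rw [← hbig, ← hWcard]; exact Finset.card_le_card hsub
  rw [← gauss_one_mul q (by omega) (finrank K ↥W)] at hineq
  rw [hcard]
  exact Nat.le_of_mul_le_mul_right hineq (by omega)

/-- if `F` is a family of subspaces of `F_q^n` (`n ≥ 3`,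
`n ≥ d+1`) with diameter at most `d`, and the layers `F(1)` and `F(n−1)` each
have at least two elements, then every member of `F(1)` is contained in every
member of `F(n−1)`, and
`|F(1)| + |F(n−1)| ≤ 2·C_q(n−2,1) < C_q(n,1) − q^{n−1}`. -/
theorem extreme_layers_bound (q n d : ℕ) (K : Type*) [Field K] [Fintype K]
    (hq : Fintype.card K = q) (hn3 : 3 ≤ n) (hnd : d + 1 ≤ n)
    (F : Set (Submodule K (Fin n → K)))
    (hdiam : ∀ A ∈ F, ∀ B ∈ F, sdelta K (Fin n → K) A B ≤ d)
    (h1 : 2 ≤ {A ∈ F | finrank K ↥A = 1}.ncard)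
    (h2 : 2 ≤ {A ∈ F | finrank K ↥A = n - 1}.ncard) :
    (∀ X ∈ F, finrank K ↥X = 1 → ∀ Y ∈ F, finrank K ↥Y = n - 1 → X ≤ Y) ∧
    {A ∈ F | finrank K ↥A = 1}.ncard + {A ∈ F | finrank K ↥A = n - 1}.ncard
      ≤ 2 * gauss q (n - 2) 1 ∧
    ((2 * gauss q (n - 2) 1 : ℤ) < (gauss q n 1 : ℤ) - q ^ (n - 1)) := by
  classical
  have hq2 : 2 ≤ q := hq ▸ Fintype.one_lt_card
  have hV : finrank K (Fin n → K) = n := Module.finrank_fin_fun K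
  -- Part 1
  have part1 : ∀ X ∈ F, finrank K ↥X = 1 → ∀ Y ∈ F, finrank K ↥Y = n - 1 → X ≤ Y := by
    intro X hX hXr Y hY hYr
    have hd := hdiam X hX Y hY
    unfold sdelta at hd
    rw [hXr, hYr] at hd
    have hle : finrank K ↥(X ⊓ Y) ≤ 1 := by
      rw [← hXr]; exact Submodule.finrank_mono inf_le_left
    have hk : finrank K ↥(X ⊓ Y) = 1 := by omega
    have : X ⊓ Y = X :=
      Submodule.eq_of_le_of_finrank_le inf_le_left (by rw [hXr, hk])
    rw [← this]; exact inf_le_right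
  refine ⟨part1, ?_, ?_⟩
  · -- counting
    set F1 := {A ∈ F | finrank K ↥A = 1} with hF1
    set F2 := {A ∈ F | finrank K ↥A = n - 1} with hF2
    have hfinV : Finite (Fin n → K) := Finite.of_fintype _
    have hfinSub : Finite (Submodule K (Fin n → K)) :=
      Finite.of_injective (fun X : Submodule K (Fin n → K) => (X : Set (Fin n → K)))
        SetLike.coe_injective
    obtain ⟨Y1, hY1, Y2, hY2, hYne⟩ := (Set.one_lt_ncard (Set.toFinite F2)).mp (by omega)
    obtain ⟨X1, hX1, X2, hX2, hXne⟩ := (Set.one_lt_ncard (Set.toFinite F1)).mp (by omega)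
    -- dim (Y1 ⊓ Y2) = n - 2
    have hYsum := Submodule.finrank_sup_add_finrank_inf_eq Y1 Y2
    rw [hY1.2, hY2.2] at hYsum
    have hsupY_le : finrank K ↥(Y1 ⊔ Y2) ≤ n := by
      have := Submodule.finrank_le (Y1 ⊔ Y2)
      rwa [hV] at this
    have hsupY_gt : n - 1 < finrank K ↥(Y1 ⊔ Y2) := by
      by_contra hc
      push_neg at hc
      have e1 : Y1 = Y1 ⊔ Y2 :=
        Submodule.eq_of_le_of_finrank_le le_sup_left (by rw [hY1.2]; exact hc)
      have e2 : Y2 = Y1 ⊔ Y2 :=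
        Submodule.eq_of_le_of_finrank_le le_sup_right (by rw [hY2.2]; exact hc)
      exact hYne (e1.trans e2.symm)
    have hYinf : finrank K ↥(Y1 ⊓ Y2) = n - 2 := by omega
    -- bound on F1
    have hb1 : F1.ncard ≤ gauss q (n - 2) 1 := by
      have := count_lines (Y1 ⊓ Y2) F1 (by
        intro X hX
        exact ⟨hX.2, le_inf (part1 X hX.1 hX.2 Y1 hY1.1 hY1.2)
          (part1 X hX.1 hX.2 Y2 hY2.1 hY2.2)⟩)
      rwa [hYinf, hq] at this
    -- dim (X1 ⊔ X2) = 2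
    have hXsum := Submodule.finrank_sup_add_finrank_inf_eq X1 X2
    rw [hX1.2, hX2.2] at hXsum
    have hXinf_le : finrank K ↥(X1 ⊓ X2) ≤ 1 := by
      rw [← hX1.2]; exact Submodule.finrank_mono inf_le_left
    have hXinf : finrank K ↥(X1 ⊓ X2) = 0 := by
      by_contra hc
      have hk : finrank K ↥(X1 ⊓ X2) = 1 := by omega
      have e1 : X1 ⊓ X2 = X1 :=
        Submodule.eq_of_le_of_finrank_le inf_le_left (by rw [hX1.2, hk])
      have e2 : X1 ⊓ X2 = X2 :=
        Submodule.eq_of_le_of_finrank_le inf_le_right (by rw [hX2.2, hk])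
      exact hXne (e1.symm.trans e2)
    have hXsup : finrank K ↥(X1 ⊔ X2) = 2 := by omega
    -- dual annihilators
    have hann_rank : ∀ U : Submodule K (Fin n → K),
        finrank K ↥U.dualAnnihilator = n - finrank K ↥U := by
      intro U
      have hquot := Submodule.finrank_quotient_add_finrank U
      have heq := LinearEquiv.finrank_eq (R := K) (M := (Fin n → K) ⧸ U)
        (N := ↥U.dualAnnihilator) (Subspace.quotEquivAnnihilator U)
      rw [hV] at hquot
      omega
    have hb2 : F2.ncard ≤ gauss q (n - 2) 1 := by
      have hinj : Function.Injective
          (Submodule.dualAnnihilator (R := K) (M := Fin n → K)) := by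
        intro a b h
        exact Subspace.dualAnnihilator_inj.mp h
      have himg := count_lines ((X1 ⊔ X2).dualAnnihilator)
        (Submodule.dualAnnihilator '' F2) (by
          rintro _ ⟨Y, hY, rfl⟩
          constructor
          · rw [hann_rank Y, hY.2]; omega
          · exact Submodule.dualAnnihilator_anti
              (sup_le (part1 X1 hX1.1 hX1.2 Y hY.1 hY.2)
                (part1 X2 hX2.1 hX2.2 Y hY.1 hY.2)))
      rw [Set.ncard_image_of_injective _ hinj, hann_rank, hXsup, hq] at himg
      exact himg
    omega
  · -- numeric inequality
    have hg2 := gauss_one_mul q (by omega) (n - 2)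
    have hgn := gauss_one_mul q (by omega) n
    have h1q : 1 ≤ q ^ (n - 2) := Nat.one_le_pow _ _ (by omega)
    have h1qn : 1 ≤ q ^ n := Nat.one_le_pow _ _ (by omega)
    zify [h1q, h1qn] at hg2 hgn
    push_cast [Nat.cast_sub (by omega : 1 ≤ q)] at hg2 hgn
    have hq2' : (2 : ℤ) ≤ q := by exact_mod_cast hq2
    have hpos : (0 : ℤ) < (q : ℤ) - 1 := by linarith
    have hq1' : (1 : ℤ) ≤ (q : ℤ) ^ (n - 2) := by exact_mod_cast h1q
    have hqn1 : (q : ℤ) ^ (n - 1) = (q : ℤ) ^ (n - 2) * q := by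
      rw [← pow_succ]; congr 1; omega
    have hqq : (q : ℤ) ^ (n - 1) * q = (q : ℤ) ^ n := by
      rw [← pow_succ]; congr 1; omega
    have e1 : (2 * (gauss q (n - 2) 1 : ℤ)) * ((q : ℤ) - 1)
        = 2 * ((q : ℤ) ^ (n - 2) - 1) := by linear_combination 2 * hg2
    have e2 : ((gauss q n 1 : ℤ) - (q : ℤ) ^ (n - 1)) * ((q : ℤ) - 1)
        = (q : ℤ) ^ (n - 1) - 1 := by linear_combination hgn - hqq
    have key : (2 * (gauss q (n - 2) 1 : ℤ)) * ((q : ℤ) - 1)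
        < ((gauss q n 1 : ℤ) - (q : ℤ) ^ (n - 1)) * ((q : ℤ) - 1) := by
      rw [e1, e2, hqn1]
      nlinarith [mul_nonneg (by linarith : (0:ℤ) ≤ (q:ℤ) - 2) (by linarith : (0:ℤ) ≤ (q:ℤ)^(n-2))]
    have := lt_of_mul_lt_mul_right key (le_of_lt hpos)
    linarith
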